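/- (Corollary 1, pure-state case.) For the shared pure state ρ_{β,γ} (β, γ : ℝ with β² + γ² ≠ 0) and every z, u : ℝ, P₊(Π(z,u)) − P₋(Π(z,u)) = 8·β·γ·sin u·sin z·sin α / ((β² + γ²)·(−3 + cos(2α))). In particular, if Bob's measurement is real (u = 0), or the state is a product state (β·γ = 0), or α is a multiple of π (sin α = 0), then Bob cannot obtain Alice's information: P₊(Π(z,u)) = P₋(Π(z,u)). -/

import Mathlib

open Matrix Kronecker Complex
open scoped ComplexOrder

noncomputable section

/-- Pauli matrix `σx`. -/
def σx : Matrix (Fin 2) (Fin 2) ℂ := !![0, 1; 1, 0]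

/-- Pauli matrix `σy`. -/
def σy : Matrix (Fin 2) (Fin 2) ℂ := !![0, -Complex.I; Complex.I, 0]

/-- Pauli matrix `σz`. -/
def σz : Matrix (Fin 2) (Fin 2) ℂ := !![1, 0; 0, -1]

/-- The simulated PT-symmetric evolution operator at the chosen time. -/
def Upt (α : ℝ) : Matrix (Fin 2) (Fin 2) ℂ :=
  !![(Real.sin α : ℂ), -Complex.I; -Complex.I, -(Real.sin α : ℂ)]

/-- Alice's operation `A₊` (do nothing). -/
def Apos : Matrix (Fin 2) (Fin 2) ℂ := 1

/-- Alice's operation `A₋` (bit flip `σx`). -/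
def Aneg : Matrix (Fin 2) (Fin 2) ℂ := σx

/-- Unnormalized post-selected state after Alice applies `A₊` followed by the
simulated PT evolution. -/
def postPlus (α : ℝ) (ρ : Matrix (Fin 2 × Fin 2) (Fin 2 × Fin 2) ℂ) :
    Matrix (Fin 2 × Fin 2) (Fin 2 × Fin 2) ℂ :=
  ((Upt α * Apos) ⊗ₖ (1 : Matrix (Fin 2) (Fin 2) ℂ)) * ρ *
    ((Upt α * Apos) ⊗ₖ (1 : Matrix (Fin 2) (Fin 2) ℂ))ᴴ

/-- Unnormalized post-selected state after Alice applies `A₋` followed by the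
simulated PT evolution. -/
def postMinus (α : ℝ) (ρ : Matrix (Fin 2 × Fin 2) (Fin 2 × Fin 2) ℂ) :
    Matrix (Fin 2 × Fin 2) (Fin 2 × Fin 2) ℂ :=
  ((Upt α * Aneg) ⊗ₖ (1 : Matrix (Fin 2) (Fin 2) ℂ)) * ρ *
    ((Upt α * Aneg) ⊗ₖ (1 : Matrix (Fin 2) (Fin 2) ℂ))ᴴ

/-- Probability that Bob obtains outcome `Π` given Alice applied `A₊`. -/
def Pplus (α : ℝ) (ρ : Matrix (Fin 2 × Fin 2) (Fin 2 × Fin 2) ℂ)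
    (Pi : Matrix (Fin 2) (Fin 2) ℂ) : ℝ :=
  ((((1 : Matrix (Fin 2) (Fin 2) ℂ) ⊗ₖ Pi) * postPlus α ρ).trace).re /
    ((postPlus α ρ).trace).re

/-- Probability that Bob obtains outcome `Π` given Alice applied `A₋`. -/
def Pminus (α : ℝ) (ρ : Matrix (Fin 2 × Fin 2) (Fin 2 × Fin 2) ℂ)
    (Pi : Matrix (Fin 2) (Fin 2) ℂ) : ℝ :=
  ((((1 : Matrix (Fin 2) (Fin 2) ℂ) ⊗ₖ Pi) * postMinus α ρ).trace).re /
    ((postMinus α ρ).trace).re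

/-- Bob's `σy`-measurement projector onto `|+_y⟩ = (|0⟩ + i|1⟩)/√2`. -/
def Piy : Matrix (Fin 2) (Fin 2) ℂ :=
  (1/2 : ℂ) • !![1, -Complex.I; Complex.I, 1]

/-- Bob's rank-one projector `Π(z,u)` for an arbitrary projective measurement. -/
def Pizu (z u : ℝ) : Matrix (Fin 2) (Fin 2) ℂ :=
  !![((Real.cos (z/2))^2 : ℂ),
     (Real.cos (z/2) : ℂ) * (Real.sin (z/2) : ℂ) * Complex.exp (-(Complex.I * u));
     (Real.cos (z/2) : ℂ) * (Real.sin (z/2) : ℂ) * Complex.exp (Complex.I * u),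
     ((Real.sin (z/2))^2 : ℂ)]

/-- The single-qubit state `|+⟩ = (|0⟩ + |1⟩)/√2`. -/
def ketPlus : Fin 2 → ℂ := ![((1 / Real.sqrt 2 : ℝ) : ℂ), ((1 / Real.sqrt 2 : ℝ) : ℂ)]

/-- The single-qubit state `|−⟩ = (|0⟩ − |1⟩)/√2`. -/
def ketMinus : Fin 2 → ℂ := ![((1 / Real.sqrt 2 : ℝ) : ℂ), ((-(1 / Real.sqrt 2) : ℝ) : ℂ)]

/-- The (normalized) pure state `|ψ_{β,γ}⟩ = (β|++⟩ + γ|−−⟩)/√(β²+γ²)`. -/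
def ψpure (β γ : ℝ) : Fin 2 × Fin 2 → ℂ := fun q =>
  ((β : ℂ) * (ketPlus q.1 * ketPlus q.2) + (γ : ℂ) * (ketMinus q.1 * ketMinus q.2)) /
    ((Real.sqrt (β^2 + γ^2) : ℝ) : ℂ)

/-- The pure two-qubit density matrix `ρ_{β,γ} = |ψ_{β,γ}⟩⟨ψ_{β,γ}|`. -/
def ρpure (β γ : ℝ) : Matrix (Fin 2 × Fin 2) (Fin 2 × Fin 2) ℂ :=
  Matrix.vecMulVec (ψpure β γ) (fun q => starRingEnd ℂ (ψpure β γ q))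

/-- The maximally entangled state `|ψ⁺⟩ = (|00⟩ + |11⟩)/√2`. -/
def ψmax : Fin 2 × Fin 2 → ℂ := fun q =>
  if q.1 = q.2 then ((1 / Real.sqrt 2 : ℝ) : ℂ) else 0

/-- The two-qubit Werner state `ρ_W(p) = p |ψ⁺⟩⟨ψ⁺| + ((1-p)/4) 1`. -/
def ρWerner (p : ℝ) : Matrix (Fin 2 × Fin 2) (Fin 2 × Fin 2) ℂ :=
  (p : ℂ) • Matrix.vecMulVec ψmax (fun q => starRingEnd ℂ (ψmax q)) +
    (((1 - p) / 4 : ℝ) : ℂ) • 1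

/-- The canonical two-qubit state with magnetizations `mx my mz` (Alice),
`nx ny nz` (Bob) and diagonal correlators `Cxx Cyy Czz`. -/
def ρcan (mx my mz nx ny nz Cxx Cyy Czz : ℝ) :
    Matrix (Fin 2 × Fin 2) (Fin 2 × Fin 2) ℂ :=
  (1/4 : ℂ) • ((1 : Matrix (Fin 2 × Fin 2) (Fin 2 × Fin 2) ℂ)
    + (mx : ℂ) • (σx ⊗ₖ (1 : Matrix (Fin 2) (Fin 2) ℂ))
    + (my : ℂ) • (σy ⊗ₖ (1 : Matrix (Fin 2) (Fin 2) ℂ))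
    + (mz : ℂ) • (σz ⊗ₖ (1 : Matrix (Fin 2) (Fin 2) ℂ))
    + (nx : ℂ) • ((1 : Matrix (Fin 2) (Fin 2) ℂ) ⊗ₖ σx)
    + (ny : ℂ) • ((1 : Matrix (Fin 2) (Fin 2) ℂ) ⊗ₖ σy)
    + (nz : ℂ) • ((1 : Matrix (Fin 2) (Fin 2) ℂ) ⊗ₖ σz)
    + (Cxx : ℂ) • (σx ⊗ₖ σx)
    + (Cyy : ℂ) • (σy ⊗ₖ σy)
    + (Czz : ℂ) • (σz ⊗ₖ σz))

/-- Bob's reduced matrix: the partial trace over Alice's subsystem. -/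
def ptraceA (X : Matrix (Fin 2 × Fin 2) (Fin 2 × Fin 2) ℂ) :
    Matrix (Fin 2) (Fin 2) ℂ :=
  Matrix.of fun i j => ∑ k : Fin 2, X (k, i) (k, j)

/-- The trace distance `T(A,B) = (1/2) tr √((A-B)ᴴ (A-B))`, where the square
root is the positive semidefinite square root. -/
def PosSemidef.sqrt {n : Type*} [Fintype n] [DecidableEq n] {A : Matrix n n ℂ}
    (hA : A.PosSemidef) : Matrix n n ℂ :=
  hA.1.eigenvectorUnitary.1 * diagonal ((↑) ∘ (√·) ∘ hA.1.eigenvalues) *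
    (star hA.1.eigenvectorUnitary : Matrix n n ℂ)

def traceDist (A B : Matrix (Fin 2) (Fin 2) ℂ) : ℝ :=
  (1/2) * ((PosSemidef.sqrt (Matrix.posSemidef_conjTranspose_mul_self (A - B))).trace).re

/-- auxiliary: weight vector of the pure state -/
def wvec (β γ : ℝ) : Fin 2 × Fin 2 → ℝ := fun p => if p.1 = p.2 then β + γ else β - γ

/-- auxiliary: unnormalized rank-one matrix -/
def Mw (β γ : ℝ) : Matrix (Fin 2 × Fin 2) (Fin 2 × Fin 2) ℂ :=
  Matrix.of fun p q => ((wvec β γ p * wvec β γ q : ℝ) : ℂ)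

lemma ψpure_eq (β γ : ℝ) (hβγ : β^2 + γ^2 ≠ 0) : ψpure β γ = fun q =>
    ((wvec β γ q / (2 * Real.sqrt (β^2 + γ^2)) : ℝ) : ℂ) := by
  have h2 : (Real.sqrt 2) * Real.sqrt 2 = 2 := Real.mul_self_sqrt (by norm_num)
  have hp : ((Real.sqrt 2 : ℝ) : ℂ)^2 = 2 := by
    rw [sq]; exact_mod_cast congrArg (Complex.ofReal) h2
  have h2' : ((Real.sqrt 2 : ℝ) : ℂ) ≠ 0 := by
    simpa using Real.sqrt_ne_zero'.mpr (by norm_num : (0:ℝ) < 2)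
  have hNpos : 0 < β^2+γ^2 := lt_of_le_of_ne (by positivity) (Ne.symm hβγ)
  have hN0 : Real.sqrt (β^2+γ^2) ≠ 0 := Real.sqrt_ne_zero'.mpr hNpos
  have hN' : ((Real.sqrt (β^2+γ^2) : ℝ) : ℂ) ≠ 0 := by exact_mod_cast hN0
  funext q
  obtain ⟨i, j⟩ := q
  fin_cases i <;> fin_cases j <;>
    · simp only [ψpure, ketPlus, ketMinus, wvec, Fin.mk_zero, Fin.mk_one,
        Matrix.cons_val_zero, Matrix.cons_val_one, Matrix.head_cons, reduceIte, if_true]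
      push_cast
      field_simp
      ring_nf
      simp [hp]

lemma ρpure_eq (β γ : ℝ) (hβγ : β^2 + γ^2 ≠ 0) :
    ρpure β γ = ((1 / (4 * (β^2 + γ^2)) : ℝ) : ℂ) • Mw β γ := by
  have hNpos : 0 < β^2+γ^2 := lt_of_le_of_ne (by positivity) (Ne.symm hβγ)
  have hN0 : Real.sqrt (β^2+γ^2) ≠ 0 := Real.sqrt_ne_zero'.mpr hNpos
  have hN : (Real.sqrt (β^2+γ^2)) * Real.sqrt (β^2+γ^2) = β^2+γ^2 :=
    Real.mul_self_sqrt (by positivity)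
  ext p q
  simp only [ρpure, ψpure_eq β γ hβγ, Matrix.vecMulVec_apply, Matrix.smul_apply, Mw,
    Matrix.of_apply, Complex.conj_ofReal, smul_eq_mul]
  norm_cast
  rw [div_mul_div_comm, one_div, inv_mul_eq_div,
    div_eq_div_iff (by positivity) (by positivity : (4*(β^2+γ^2):ℝ) ≠ 0)]
  linear_combination (-4 * wvec β γ p * wvec β γ q) * hN

lemma exp_Iu (u : ℝ) :
    Complex.exp (Complex.I * u) = (Real.cos u : ℂ) + (Real.sin u : ℂ) * Complex.I := by
  rw [mul_comm, Complex.exp_mul_I, Complex.ofReal_cos, Complex.ofReal_sin]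

lemma exp_negIu (u : ℝ) :
    Complex.exp (-(Complex.I * u)) = (Real.cos u : ℂ) - (Real.sin u : ℂ) * Complex.I := by
  rw [show -(Complex.I * (u:ℂ)) = (-(u:ℂ)) * Complex.I by ring, Complex.exp_mul_I,
    Complex.cos_neg, Complex.sin_neg, Complex.ofReal_cos, Complex.ofReal_sin]; ring

set_option maxHeartbeats 2000000 in
lemma trNumP (α β γ z u : ℝ) :
    (((1 : Matrix (Fin 2) (Fin 2) ℂ) ⊗ₖ Pizu z u) * postPlus α (Mw β γ)).trace =
    ((((1 + Real.sin α^2) * (2*(β^2+γ^2)*((Real.cos (z/2))^2 + (Real.sin (z/2))^2)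
        + 4*(β^2-γ^2)*Real.cos (z/2)*Real.sin (z/2)*Real.cos u)
      - 16 * Real.sin α * β * γ * Real.cos (z/2) * Real.sin (z/2) * Real.sin u : ℝ)) : ℂ) := by
  simp only [postPlus, Upt, Apos, Pizu, Mw, mul_one, Matrix.one_fin_two, exp_Iu, exp_negIu,
    Matrix.trace, Matrix.diag, Fintype.sum_prod_type, Fin.sum_univ_two,
    Matrix.mul_apply, Matrix.kroneckerMap_apply, Matrix.conjTranspose_apply,
    Matrix.of_apply, Matrix.cons_val', Matrix.cons_val_zero, Matrix.cons_val_one,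
    Matrix.head_cons, Matrix.head_fin_const, Matrix.empty_val', Matrix.cons_val_fin_one,
    Complex.star_def, map_add, _root_.map_mul, map_sub, map_neg, _root_.map_one, map_zero,
    Complex.conj_ofReal, Complex.conj_I, wvec, Fin.isValue, Fin.reduceEq, reduceIte,
    if_true, if_false]
  push_cast
  ring_nf
  simp only [Complex.I_sq]
  ring_nf

set_option maxHeartbeats 2000000 in
lemma trNumM (α β γ z u : ℝ) :
    (((1 : Matrix (Fin 2) (Fin 2) ℂ) ⊗ₖ Pizu z u) * postMinus α (Mw β γ)).trace =
    ((((1 + Real.sin α^2) * (2*(β^2+γ^2)*((Real.cos (z/2))^2 + (Real.sin (z/2))^2)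
        + 4*(β^2-γ^2)*Real.cos (z/2)*Real.sin (z/2)*Real.cos u)
      + 16 * Real.sin α * β * γ * Real.cos (z/2) * Real.sin (z/2) * Real.sin u : ℝ)) : ℂ) := by
  simp only [postMinus, Upt, Aneg, σx, Pizu, Mw, mul_one, Matrix.one_fin_two, exp_Iu, exp_negIu,
    Matrix.trace, Matrix.diag, Fintype.sum_prod_type, Fin.sum_univ_two,
    Matrix.mul_apply, Matrix.kroneckerMap_apply, Matrix.conjTranspose_apply,
    Matrix.of_apply, Matrix.cons_val', Matrix.cons_val_zero, Matrix.cons_val_one,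
    Matrix.head_cons, Matrix.head_fin_const, Matrix.empty_val', Matrix.cons_val_fin_one,
    Complex.star_def, map_add, _root_.map_mul, map_sub, map_neg, _root_.map_one, map_zero,
    Complex.conj_ofReal, Complex.conj_I, wvec, Fin.isValue, Fin.reduceEq, reduceIte,
    if_true, if_false]
  push_cast
  ring_nf
  simp only [Complex.I_sq]
  ring_nf

set_option maxHeartbeats 2000000 in
lemma trDenP (α β γ : ℝ) :
    (postPlus α (Mw β γ)).trace = (((1 + Real.sin α^2) * (4*(β^2+γ^2)) : ℝ) : ℂ) := by
  simp only [postPlus, Upt, Apos, Mw, mul_one, Matrix.one_fin_two,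
    Matrix.trace, Matrix.diag, Fintype.sum_prod_type, Fin.sum_univ_two,
    Matrix.mul_apply, Matrix.kroneckerMap_apply, Matrix.conjTranspose_apply,
    Matrix.of_apply, Matrix.cons_val', Matrix.cons_val_zero, Matrix.cons_val_one,
    Matrix.head_cons, Matrix.head_fin_const, Matrix.empty_val', Matrix.cons_val_fin_one,
    Complex.star_def, map_add, _root_.map_mul, map_sub, map_neg, _root_.map_one, map_zero,
    Complex.conj_ofReal, Complex.conj_I, wvec, Fin.isValue, Fin.reduceEq, reduceIte,
    if_true, if_false]
  push_cast
  ring_nf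
  simp only [Complex.I_sq]
  ring_nf

set_option maxHeartbeats 2000000 in
lemma trDenM (α β γ : ℝ) :
    (postMinus α (Mw β γ)).trace = (((1 + Real.sin α^2) * (4*(β^2+γ^2)) : ℝ) : ℂ) := by
  simp only [postMinus, Upt, Aneg, σx, Mw, mul_one, Matrix.one_fin_two,
    Matrix.trace, Matrix.diag, Fintype.sum_prod_type, Fin.sum_univ_two,
    Matrix.mul_apply, Matrix.kroneckerMap_apply, Matrix.conjTranspose_apply,
    Matrix.of_apply, Matrix.cons_val', Matrix.cons_val_zero, Matrix.cons_val_one,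
    Matrix.head_cons, Matrix.head_fin_const, Matrix.empty_val', Matrix.cons_val_fin_one,
    Complex.star_def, map_add, _root_.map_mul, map_sub, map_neg, _root_.map_one, map_zero,
    Complex.conj_ofReal, Complex.conj_I, wvec, Fin.isValue, Fin.reduceEq, reduceIte,
    if_true, if_false]
  push_cast
  ring_nf
  simp only [Complex.I_sq]
  ring_nf

lemma postPlus_smul (α : ℝ) (c : ℂ) (M : Matrix (Fin 2 × Fin 2) (Fin 2 × Fin 2) ℂ) :
    postPlus α (c • M) = c • postPlus α M := by
  simp [postPlus, Matrix.mul_smul, Matrix.smul_mul]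

lemma postMinus_smul (α : ℝ) (c : ℂ) (M : Matrix (Fin 2 × Fin 2) (Fin 2 × Fin 2) ℂ) :
    postMinus α (c • M) = c • postMinus α M := by
  simp [postMinus, Matrix.mul_smul, Matrix.smul_mul]

/-- Corollary 1, pure-state case: for the shared pure state `ρ_{β,γ}` and
arbitrary measurement `Π(z,u)` by Bob,
`P₊ − P₋ = 8βγ sin u sin z sin α / ((β²+γ²)(−3 + cos 2α))`; in particular if
`u = 0` (real measurement), or `βγ = 0` (product state), or `sin α = 0`, then
Bob cannot obtain Alice's information. -/

theorem stmt11 (α β γ : ℝ) (hβγ : β^2 + γ^2 ≠ 0) :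
    ∀ z u : ℝ,
      Pplus α (ρpure β γ) (Pizu z u) - Pminus α (ρpure β γ) (Pizu z u) =
        8 * β * γ * Real.sin u * Real.sin z * Real.sin α /
          ((β^2 + γ^2) * (-3 + Real.cos (2*α))) ∧
      (u = 0 ∨ β * γ = 0 ∨ Real.sin α = 0 →
        Pplus α (ρpure β γ) (Pizu z u) = Pminus α (ρpure β γ) (Pizu z u)) := by
  intro z u
  have hNpos : 0 < β^2+γ^2 := lt_of_le_of_ne (by positivity) (Ne.symm hβγ)
  have hs : (0:ℝ) < 1 + Real.sin α^2 := by positivity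
  have hr : (0:ℝ) < 1 / (4 * (β^2 + γ^2)) := by positivity
  have hcd : (Real.cos (z/2))^2 + (Real.sin (z/2))^2 = 1 := by
    rw [add_comm]; exact Real.sin_sq_add_cos_sq (z/2)
  have hsz : Real.sin z = 2 * Real.sin (z/2) * Real.cos (z/2) := by
    have h := Real.sin_two_mul (z/2)
    rw [show 2*(z/2) = z by ring] at h
    exact h
  have hc2 : Real.cos (2*α) = 1 - 2 * Real.sin α^2 := by
    rw [Real.cos_two_mul, ← Real.sin_sq_add_cos_sq α]; ring
  set r : ℝ := 1 / (4 * (β^2 + γ^2)) with hrdef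
  have hPp : Pplus α (ρpure β γ) (Pizu z u) =
      (r * (((1 + Real.sin α^2) * (2*(β^2+γ^2)*((Real.cos (z/2))^2 + (Real.sin (z/2))^2)
        + 4*(β^2-γ^2)*Real.cos (z/2)*Real.sin (z/2)*Real.cos u)
      - 16 * Real.sin α * β * γ * Real.cos (z/2) * Real.sin (z/2) * Real.sin u)))
      / (r * ((1 + Real.sin α^2) * (4*(β^2+γ^2)))) := by
    rw [Pplus, ρpure_eq β γ hβγ, postPlus_smul, Matrix.mul_smul, Matrix.trace_smul,
      Matrix.trace_smul, trNumP, trDenP, smul_eq_mul, smul_eq_mul,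
      ← Complex.ofReal_mul, ← Complex.ofReal_mul, Complex.ofReal_re, Complex.ofReal_re]
  have hPm : Pminus α (ρpure β γ) (Pizu z u) =
      (r * (((1 + Real.sin α^2) * (2*(β^2+γ^2)*((Real.cos (z/2))^2 + (Real.sin (z/2))^2)
        + 4*(β^2-γ^2)*Real.cos (z/2)*Real.sin (z/2)*Real.cos u)
      + 16 * Real.sin α * β * γ * Real.cos (z/2) * Real.sin (z/2) * Real.sin u)))
      / (r * ((1 + Real.sin α^2) * (4*(β^2+γ^2)))) := by
    rw [Pminus, ρpure_eq β γ hβγ, postMinus_smul, Matrix.mul_smul, Matrix.trace_smul,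
      Matrix.trace_smul, trNumM, trDenM, smul_eq_mul, smul_eq_mul,
      ← Complex.ofReal_mul, ← Complex.ofReal_mul, Complex.ofReal_re, Complex.ofReal_re]
  have key : Pplus α (ρpure β γ) (Pizu z u) - Pminus α (ρpure β γ) (Pizu z u) =
      8 * β * γ * Real.sin u * Real.sin z * Real.sin α /
        ((β^2 + γ^2) * (-3 + Real.cos (2*α))) := by
    rw [hPp, hPm, hsz, hc2, hcd]
    have h1 : r * ((1 + Real.sin α^2) * (4*(β^2+γ^2))) ≠ 0 := by positivity
    have h2 : (β^2+γ^2) * (-3 + (1 - 2*Real.sin α^2)) ≠ 0 := by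
      have : -3 + (1 - 2*Real.sin α^2) < 0 := by nlinarith [sq_nonneg (Real.sin α)]
      exact mul_ne_zero (ne_of_gt hNpos) (ne_of_lt this)
    rw [div_sub_div_same, div_eq_div_iff h1 h2, hrdef]
    field_simp
    ring
  refine ⟨key, fun h => sub_eq_zero.mp ?_⟩
  rw [key]
  rcases h with h | h | h
  · simp [h]
  · rcases mul_eq_zero.mp h with h | h <;> simp [h]
  · simp [h]
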